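/- arXiv:1811.07476 — 2 statements merged into one kernel-verified Lean document; each statement's English description precedes it below -/
import Mathlib

section
/- There exists a universal constant C > 0 such that for every δ ∈ (0,1), if the number of plays satisfies T ≥ (C/(Δ² p²))·ln(n/(Δ p δ)), then with probability at least 1 − δ the best arm has the strictly highest empirical mean, i.e. μ̂_{i*} > μ̂_i for all i ≠ i*. (Sample-complexity of the MaximalSampling strategy, Theorem 3.1.) -/
open MeasureTheory ProbabilityTheory Finset Real



/-- Telescoping identity over any finset in a linear order. -/
lemma telescope_prod {ι : Type*} [LinearOrder ι] (s : Finset ι) (f : ι → ℝ) :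
    ∑ k ∈ s, f k * ∏ l ∈ s.filter (· < k), (1 - f l) = 1 - ∏ k ∈ s, (1 - f k) := by
  induction s using Finset.induction_on_max with
  | empty => simp
  | insert a s ha ih =>
    have hns : a ∉ s := fun h => lt_irrefl a (ha a h)
    rw [Finset.sum_insert hns, Finset.prod_insert hns]
    have h1 : (insert a s).filter (· < a) = s := by
      ext x
      simp only [Finset.mem_filter, Finset.mem_insert]
      constructor
      · rintro ⟨h | h, hlt⟩
        · exact absurd hlt (by simp [h])
        · exact h
      · exact fun hx => ⟨Or.inr hx, ha x hx⟩
    have h2 : ∀ k ∈ s, (insert a s).filter (· < k) = s.filter (· < k) := by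
      intro k hk
      ext x
      simp only [Finset.mem_filter, Finset.mem_insert]
      constructor
      · rintro ⟨h | h, hlt⟩
        · subst h; exact (lt_asymm (ha k hk) hlt).elim
        · exact ⟨h, hlt⟩
      · exact fun hx => ⟨Or.inr hx.1, hx.2⟩
    rw [h1, Finset.sum_congr rfl fun k hk => by rw [h2 k hk], ih]
    ring

/-- products of 0/1 values -/
lemma prod01 {ι : Type*} (s : Finset ι) (g : ι → ℝ) (h : ∀ k ∈ s, g k = 0 ∨ g k = 1) :
    (∏ k ∈ s, g k = 1 ∧ ∀ k ∈ s, g k = 1) ∨ (∏ k ∈ s, g k = 0) := by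
  by_cases hall : ∀ k ∈ s, g k = 1
  · exact Or.inl ⟨Finset.prod_eq_one hall, hall⟩
  · push_neg at hall
    obtain ⟨k, hk, hk1⟩ := hall
    have : g k = 0 := (h k hk).resolve_right hk1
    exact Or.inr (Finset.prod_eq_zero hk this)

lemma prod01_mem {ι : Type*} (s : Finset ι) (g : ι → ℝ) (h : ∀ k ∈ s, g k = 0 ∨ g k = 1) :
    ∏ k ∈ s, g k = 0 ∨ ∏ k ∈ s, g k = 1 := by
  rcases prod01 s g h with ⟨h1, _⟩ | h0
  · exact Or.inr h1
  · exact Or.inl h0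

lemma prod01_eq_one_iff {ι : Type*} (s : Finset ι) (g : ι → ℝ) (h : ∀ k ∈ s, g k = 0 ∨ g k = 1) :
    (∏ k ∈ s, g k = 1) ↔ ∀ k ∈ s, g k = 1 := by
  constructor
  · intro hp
    rcases prod01 s g h with ⟨_, hall⟩ | h0
    · exact hall
    · rw [h0] at hp; norm_num at hp
  · exact Finset.prod_eq_one

/-- quadratic exp bound -/
lemma exp_sub_one_sub_le {x : ℝ} (hx : |x| ≤ 1) : Real.exp x - 1 - x ≤ x ^ 2 := by
  have h := Real.exp_bound hx (n := 2) (by norm_num)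
  have h2 : ∑ i ∈ Finset.range 2, x ^ i / i.factorial = 1 + x := by
    simp [Finset.sum_range_succ]
  rw [h2] at h
  have h3 : rexp x - (1 + x) ≤ |x| ^ 2 * (↑(Nat.succ 2) / (↑(Nat.factorial 2) * ↑2)) := (abs_le.mp h).2
  have h4 : (↑(Nat.succ 2) / ((Nat.factorial 2 : ℝ) * ↑2)) = 3/4 := by norm_num [Nat.factorial]
  rw [h4] at h3
  nlinarith [sq_abs x, sq_nonneg x]




section Bern

variable {Ω : Type} [MeasureSpace Ω] [IsProbabilityMeasure (ℙ : Measure Ω)]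

lemma bern_integrable (V : Ω → ℝ) (hm : Measurable V) (h01 : ∀ ω, V ω = 0 ∨ V ω = 1) :
    Integrable V ℙ := by
  refine Integrable.mono' (integrable_const 1) hm.aestronglyMeasurable ?_
  filter_upwards with ω
  rcases h01 ω with h | h <;> simp [h]

lemma bern_integral (V : Ω → ℝ) (hm : Measurable V) (h01 : ∀ ω, V ω = 0 ∨ V ω = 1)
    {θ : ℝ} (hθ0 : 0 ≤ θ) (hP : ℙ {ω | V ω = 1} = ENNReal.ofReal θ) :
    ∫ ω, V ω ∂ℙ = θ := by
  have hind : V = Set.indicator {ω | V ω = 1} (1 : Ω → ℝ) := by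
    funext ω
    rcases h01 ω with h | h
    · rw [h, Set.indicator_of_notMem]
      simp only [Set.mem_setOf_eq, h]
      norm_num
    · rw [h, Set.indicator_of_mem (by exact h : ω ∈ {ω | V ω = 1})]
      rfl
  have hms : MeasurableSet {ω | V ω = 1} := hm (measurableSet_singleton 1)
  rw [hind, integral_indicator_one hms, measureReal_def, hP, ENNReal.toReal_ofReal hθ0]

lemma bern_mgf (V : Ω → ℝ) (hm : Measurable V) (h01 : ∀ ω, V ω = 0 ∨ V ω = 1)
    {θ : ℝ} (hθ0 : 0 ≤ θ) (hP : ℙ {ω | V ω = 1} = ENNReal.ofReal θ) (t : ℝ) :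
    mgf V ℙ t = 1 + (Real.exp t - 1) * θ := by
  have hpt : ∀ ω, Real.exp (t * V ω) = 1 + (Real.exp t - 1) * V ω := by
    intro ω
    rcases h01 ω with h | h <;> simp [h]
  rw [mgf]
  calc ∫ ω, Real.exp (t * V ω) ∂ℙ = ∫ ω, (1 + (Real.exp t - 1) * V ω) ∂ℙ := by
        exact integral_congr_ae (Filter.Eventually.of_forall hpt)
    _ = 1 + (Real.exp t - 1) * θ := by
        rw [integral_add (integrable_const 1) ((bern_integrable V hm h01).const_mul _),
          integral_const, integral_const_mul, bern_integral V hm h01 hθ0 hP]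
        simp

lemma mgf_sum_of_indep {T : ℕ} (V : Fin T → Ω → ℝ) (hm : ∀ j, Measurable (V j))
    (hind : ∀ (j : Fin T) (s : Finset (Fin T)), j ∉ s →
      IndepFun (V j) (fun ω => ∑ j' ∈ s, V j' ω) ℙ)
    (t : ℝ) (s : Finset (Fin T)) :
    mgf (fun ω => ∑ j ∈ s, V j ω) ℙ t = ∏ j ∈ s, mgf (V j) ℙ t := by
  classical
  induction s using Finset.induction_on with
  | empty => simp [mgf_const]
  | insert a s ha ih =>
    have heq : (fun ω => ∑ j ∈ insert a s, V j ω) = (V a + fun ω => ∑ j ∈ s, V j ω) := by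
      funext ω; rw [Finset.sum_insert ha]; rfl
    rw [heq, IndepFun.mgf_add' (hind a s ha) (hm a).aestronglyMeasurable
      (Finset.aestronglyMeasurable_fun_sum s fun j _ => (hm j).aestronglyMeasurable),
      Finset.prod_insert ha, ih]

end Bern




section C
variable {Ω : Type} [MeasureSpace Ω] [IsProbabilityMeasure (ℙ : Measure Ω)]

-- placeholders from aux2 (assume compiled together eventually)
lemma bern_chernoff {T : ℕ} (V : Fin T → Ω → ℝ)
    (hm : ∀ j, Measurable (V j)) (h01 : ∀ j ω, V j ω = 0 ∨ V j ω = 1)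
    {θ : ℝ} (hθ0 : 0 ≤ θ) (hθ1 : θ ≤ 1)
    (hP : ∀ j, ℙ {ω | V j ω = 1} = ENNReal.ofReal θ)
    (hind : ∀ (j : Fin T) (s : Finset (Fin T)), j ∉ s →
      IndepFun (V j) (fun ω => ∑ j' ∈ s, V j' ω) ℙ)
    {ε : ℝ} (hε : 0 < ε) (hε1 : ε ≤ 1) :
    ℙ ({ω | (∑ j, V j ω) ≤ T * θ - T * ε} ∪ {ω | T * θ + T * ε ≤ ∑ j, V j ω})
      ≤ ENNReal.ofReal (2 * Real.exp (-((T : ℝ) * ε ^ 2 / 4))) := by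
  set S : Ω → ℝ := fun ω => ∑ j, V j ω with hS
  have hSm : Measurable S := Finset.measurable_sum _ fun j _ => hm j
  have hS01 : ∀ ω, 0 ≤ S ω ∧ S ω ≤ T := by
    intro ω
    constructor
    · exact Finset.sum_nonneg fun j _ => by rcases h01 j ω with h | h <;> simp [h]
    · calc S ω ≤ ∑ _j : Fin T, (1 : ℝ) :=
          Finset.sum_le_sum fun j _ => by rcases h01 j ω with h | h <;> simp [h]
        _ = T := by simp
  have hmgf : ∀ t : ℝ, mgf S ℙ t = (1 + (Real.exp t - 1) * θ) ^ T := by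
    intro t
    rw [hS, mgf_sum_of_indep V hm hind t Finset.univ]
    rw [Finset.prod_congr rfl fun j _ => bern_mgf (V j) (hm j) (h01 j) hθ0 (hP j) t]
    simp [Finset.prod_const]
  have hint : ∀ t : ℝ, Integrable (fun ω => Real.exp (t * S ω)) ℙ := by
    intro t
    refine Integrable.mono' (integrable_const (Real.exp (|t| * T)))
      ((hSm.const_mul t).exp.aestronglyMeasurable) ?_
    filter_upwards with ω
    rw [Real.norm_eq_abs, abs_of_pos (Real.exp_pos _), Real.exp_le_exp]
    calc t * S ω ≤ |t * S ω| := le_abs_self _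
      _ = |t| * |S ω| := abs_mul _ _
      _ ≤ |t| * T := mul_le_mul_of_nonneg_left
          (by rw [abs_of_nonneg (hS01 ω).1]; exact (hS01 ω).2) (abs_nonneg t)
  -- common exponent bound
  have hbase_nonneg : ∀ t : ℝ, 0 ≤ 1 + (Real.exp t - 1) * θ := by
    intro t
    nlinarith [Real.exp_pos t]
  have hbase_le : ∀ t : ℝ, 1 + (Real.exp t - 1) * θ ≤ Real.exp (θ * (Real.exp t - 1)) := by
    intro t
    have := Real.add_one_le_exp (θ * (Real.exp t - 1))
    nlinarith
  have hpow : ∀ t : ℝ, (1 + (Real.exp t - 1) * θ) ^ T ≤ Real.exp ((T : ℝ) * (θ * (Real.exp t - 1))) := by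
    intro t
    calc (1 + (Real.exp t - 1) * θ) ^ T ≤ (Real.exp (θ * (Real.exp t - 1))) ^ T :=
          pow_le_pow_left₀ (hbase_nonneg t) (hbase_le t) T
      _ = Real.exp ((T : ℝ) * (θ * (Real.exp t - 1))) := by
          rw [← Real.exp_nat_mul]
  have ht0 : (0:ℝ) ≤ ε / 2 := by positivity
  have ht1 : |ε / 2| ≤ 1 := by rw [abs_of_nonneg ht0]; linarith
  have ht1' : |(-(ε / 2))| ≤ 1 := by rwa [abs_neg]
  have hTnn : (0:ℝ) ≤ (T:ℝ) := Nat.cast_nonneg T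
  -- upper tail
  have hup : (ℙ {ω | (T:ℝ) * θ + T * ε ≤ S ω}).toReal ≤ Real.exp (-((T : ℝ) * ε ^ 2 / 4)) := by
    have h := measure_ge_le_exp_mul_mgf (X := S) (μ := ℙ) (t := ε / 2) ((T:ℝ) * θ + T * ε) ht0
      (hint (ε / 2))
    rw [hmgf (ε / 2)] at h
    refine h.trans ?_
    calc Real.exp (-(ε / 2) * ((T:ℝ) * θ + T * ε)) * (1 + (Real.exp (ε / 2) - 1) * θ) ^ T
        ≤ Real.exp (-(ε / 2) * ((T:ℝ) * θ + T * ε)) * Real.exp ((T : ℝ) * (θ * (Real.exp (ε / 2) - 1))) :=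
          mul_le_mul_of_nonneg_left (hpow (ε / 2)) (Real.exp_pos _).le
      _ = Real.exp (-(ε / 2) * ((T:ℝ) * θ + T * ε) + (T : ℝ) * (θ * (Real.exp (ε / 2) - 1))) := by
          rw [← Real.exp_add]
      _ ≤ Real.exp (-((T : ℝ) * ε ^ 2 / 4)) := by
          rw [Real.exp_le_exp]
          have hkey : Real.exp (ε / 2) - 1 - ε / 2 ≤ (ε / 2) ^ 2 := exp_sub_one_sub_le ht1
          have hkey0 : 0 ≤ Real.exp (ε / 2) - 1 - ε / 2 := by
            have := Real.add_one_le_exp (ε / 2); linarith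
          have hθb : θ * (Real.exp (ε / 2) - 1 - ε / 2) ≤ (ε / 2) ^ 2 := by nlinarith
          nlinarith [mul_le_mul_of_nonneg_left hθb hTnn]
  -- lower tail
  have hlo : (ℙ {ω | S ω ≤ (T:ℝ) * θ - T * ε}).toReal ≤ Real.exp (-((T : ℝ) * ε ^ 2 / 4)) := by
    have h := measure_le_le_exp_mul_mgf (X := S) (μ := ℙ) (t := -(ε / 2)) ((T:ℝ) * θ - T * ε)
      (by linarith) (hint (-(ε / 2)))
    rw [hmgf (-(ε / 2))] at h
    refine h.trans ?_
    calc Real.exp (-(-(ε / 2)) * ((T:ℝ) * θ - T * ε)) * (1 + (Real.exp (-(ε / 2)) - 1) * θ) ^ T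
        ≤ Real.exp (-(-(ε / 2)) * ((T:ℝ) * θ - T * ε)) *
            Real.exp ((T : ℝ) * (θ * (Real.exp (-(ε / 2)) - 1))) :=
          mul_le_mul_of_nonneg_left (hpow (-(ε / 2))) (Real.exp_pos _).le
      _ = Real.exp (-(-(ε / 2)) * ((T:ℝ) * θ - T * ε) + (T : ℝ) * (θ * (Real.exp (-(ε / 2)) - 1))) := by
          rw [← Real.exp_add]
      _ ≤ Real.exp (-((T : ℝ) * ε ^ 2 / 4)) := by
          rw [Real.exp_le_exp]
          have hkey : Real.exp (-(ε / 2)) - 1 - (-(ε / 2)) ≤ (-(ε / 2)) ^ 2 :=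
            exp_sub_one_sub_le ht1'
          have hkey0 : 0 ≤ Real.exp (-(ε / 2)) - 1 - (-(ε / 2)) := by
            have := Real.add_one_le_exp (-(ε / 2)); linarith
          have hθb : θ * (Real.exp (-(ε / 2)) - 1 + ε / 2) ≤ (ε / 2) ^ 2 := by nlinarith
          nlinarith [mul_le_mul_of_nonneg_left hθb hTnn]
  -- combine
  have e_nonneg : 0 ≤ Real.exp (-((T : ℝ) * ε ^ 2 / 4)) := (Real.exp_pos _).le
  have h1 : ℙ {ω | S ω ≤ (T:ℝ) * θ - T * ε} ≤ ENNReal.ofReal (Real.exp (-((T : ℝ) * ε ^ 2 / 4))) := by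
    rw [← ENNReal.ofReal_toReal (measure_ne_top ℙ _)]
    exact ENNReal.ofReal_le_ofReal hlo
  have h2 : ℙ {ω | (T:ℝ) * θ + T * ε ≤ S ω} ≤ ENNReal.ofReal (Real.exp (-((T : ℝ) * ε ^ 2 / 4))) := by
    rw [← ENNReal.ofReal_toReal (measure_ne_top ℙ _)]
    exact ENNReal.ofReal_le_ofReal hup
  calc ℙ ({ω | S ω ≤ (T:ℝ) * θ - T * ε} ∪ {ω | (T:ℝ) * θ + T * ε ≤ S ω})
      ≤ ℙ {ω | S ω ≤ (T:ℝ) * θ - T * ε} + ℙ {ω | (T:ℝ) * θ + T * ε ≤ S ω} := measure_union_le _ _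
    _ ≤ ENNReal.ofReal (Real.exp (-((T : ℝ) * ε ^ 2 / 4)))
        + ENNReal.ofReal (Real.exp (-((T : ℝ) * ε ^ 2 / 4))) := add_le_add h1 h2
    _ = ENNReal.ofReal (2 * Real.exp (-((T : ℝ) * ε ^ 2 / 4))) := by
        rw [← ENNReal.ofReal_add e_nonneg e_nonneg]; ring_nf

end C




lemma indep_block {Ω : Type} [MeasureSpace Ω] {T n : ℕ}
    (Y : Fin T → Fin n → Ω → ℝ) (hYm : ∀ j i, Measurable (Y j i))
    (hind : iIndepFun (β := fun _ : Fin T × Fin n => ℝ) (fun q ω => Y q.1 q.2 ω) ℙ)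
    (φ : (Fin n → ℝ) → ℝ) (hφ : Measurable φ) (j : Fin T) (s : Finset (Fin T)) (hj : j ∉ s) :
    IndepFun (fun ω => φ (fun k => Y j k ω)) (fun ω => ∑ j' ∈ s, φ (fun k => Y j' k ω)) ℙ := by
  classical
  set S₁ : Finset (Fin T × Fin n) := ({j} : Finset (Fin T)) ×ˢ Finset.univ with hS₁
  set S₂ : Finset (Fin T × Fin n) := s ×ˢ Finset.univ with hS₂
  have hdisj : Disjoint S₁ S₂ := by
    rw [Finset.disjoint_left]
    rintro ⟨a, b⟩ h1 h2
    simp only [hS₁, hS₂, Finset.mem_product, Finset.mem_singleton] at h1 h2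
    exact hj (h1.1 ▸ h2.1)
  have base := hind.indepFun_finset S₁ S₂ hdisj (fun q => hYm q.1 q.2)
  have hm1 : ∀ k : Fin n, ((j, k) : Fin T × Fin n) ∈ S₁ := by
    intro k; simp [hS₁]
  have hm2 : ∀ (j' : Fin T), j' ∈ s → ∀ (k : Fin n), ((j', k) : Fin T × Fin n) ∈ S₂ := by
    intro j' hj' k; simp [hS₂, hj']
  let g₁ : ((q : S₁) → ℝ) → ℝ := fun v => φ (fun k => v ⟨(j, k), hm1 k⟩)
  let g₂ : ((q : S₂) → ℝ) → ℝ := fun v =>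
    ∑ j' ∈ s.attach, φ (fun k => v ⟨(j'.1, k), hm2 j'.1 j'.2 k⟩)
  have hg₁ : Measurable g₁ := hφ.comp (measurable_pi_lambda _ fun k => measurable_pi_apply _)
  have hg₂ : Measurable g₂ :=
    Finset.measurable_sum _ fun j' _ =>
      hφ.comp (measurable_pi_lambda _ fun k => measurable_pi_apply _)
  have h := base.comp hg₁ hg₂
  have e1 : (g₁ ∘ fun a (q : S₁) => Y (q : Fin T × Fin n).1 (q : Fin T × Fin n).2 a)
      = fun ω => φ (fun k => Y j k ω) := rfl
  have e2 : (g₂ ∘ fun a (q : S₂) => Y (q : Fin T × Fin n).1 (q : Fin T × Fin n).2 a)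
      = fun ω => ∑ j' ∈ s, φ (fun k => Y j' k ω) := by
    funext ω
    simp only [Function.comp_apply, g₂]
    exact Finset.sum_attach s (fun j' => φ (fun k => Y j' k ω))
  rwa [e1, e2] at h




section P
variable {Ω : Type} [MeasureSpace Ω] [IsProbabilityMeasure (ℙ : Measure Ω)] {T n : ℕ}
  (Y : Fin T → Fin n → Ω → ℝ) (μ : Fin n → ℝ)

lemma prob_Y0 (hYm : ∀ j i, Measurable (Y j i)) (h01 : ∀ j i ω, Y j i ω = 0 ∨ Y j i ω = 1)
    (hP : ∀ j i, ℙ {ω | Y j i ω = 1} = ENNReal.ofReal (μ i)) (hμ0 : ∀ i, 0 ≤ μ i)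
    (j : Fin T) (k : Fin n) :
    ℙ ((fun ω => Y j k ω) ⁻¹' {0}) = ENNReal.ofReal (1 - μ k) := by
  have hset : (fun ω => Y j k ω) ⁻¹' ({0} : Set ℝ) = {ω | Y j k ω = 1}ᶜ := by
    ext ω
    simp only [Set.mem_preimage, Set.mem_singleton_iff, Set.mem_compl_iff, Set.mem_setOf_eq]
    rcases h01 j k ω with h | h <;> simp [h]
  have hms : MeasurableSet {ω | Y j k ω = 1} := hYm j k (measurableSet_singleton 1)
  rw [hset, prob_compl_eq_one_sub hms, hP, ENNReal.ofReal_sub _ (hμ0 k), ENNReal.ofReal_one]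

end P

section P2
variable {Ω : Type} [MeasureSpace Ω] [IsProbabilityMeasure (ℙ : Measure Ω)] {T n : ℕ}
  (Y : Fin T → Fin n → Ω → ℝ) (μ : Fin n → ℝ)

lemma prob_W (hYm : ∀ j i, Measurable (Y j i)) (h01 : ∀ j i ω, Y j i ω = 0 ∨ Y j i ω = 1)
    (hP : ∀ j i, ℙ {ω | Y j i ω = 1} = ENNReal.ofReal (μ i)) (hμ0 : ∀ i, 0 ≤ μ i)
    (hμ1 : ∀ i, μ i ≤ 1)
    (hind : iIndepFun (β := fun _ : Fin T × Fin n => ℝ) (fun q ω => Y q.1 q.2 ω) ℙ)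
    (j : Fin T) (i : Fin n) :
    ℙ {ω | (∏ k ∈ Finset.Iio i, (1 - Y j k ω)) = 1}
      = ENNReal.ofReal (∏ k ∈ Finset.Iio i, (1 - μ k)) := by
  classical
  set S : Finset (Fin T × Fin n) := (Finset.Iio i).image (fun k => ((j, k) : Fin T × Fin n))
    with hS
  have key := hind.measure_inter_preimage_eq_mul (S := S) (sets := fun _ => ({0} : Set ℝ))
    (fun q _ => measurableSet_singleton 0)
  have hset : (⋂ q ∈ S, (fun ω => Y q.1 q.2 ω) ⁻¹' ({0} : Set ℝ))
      = {ω | (∏ k ∈ Finset.Iio i, (1 - Y j k ω)) = 1} := by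
    ext ω
    constructor
    · intro hω
      have hall : ∀ k, k < i → Y j k ω = 0 := by
        intro k hk
        have := Set.mem_iInter₂.mp hω (j, k)
          (Finset.mem_image.mpr ⟨k, Finset.mem_Iio.mpr hk, rfl⟩)
        simpa using this
      show (∏ k ∈ Finset.Iio i, (1 - Y j k ω)) = 1
      rw [prod01_eq_one_iff _ _ (fun k _ => by rcases h01 j k ω with h | h <;> simp [h])]
      intro k hk
      rw [hall k (Finset.mem_Iio.mp hk)]; ring
    · intro hω
      have h1 : ∀ k ∈ Finset.Iio i, 1 - Y j k ω = 1 :=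
        (prod01_eq_one_iff _ _ (fun k _ => by rcases h01 j k ω with h | h <;> simp [h])).mp hω
      refine Set.mem_iInter₂.mpr ?_
      rintro ⟨a, b⟩ hq
      rcases Finset.mem_image.mp hq with ⟨k, hk, heq⟩
      cases heq
      have := h1 _ hk
      simp only [Set.mem_preimage, Set.mem_singleton_iff]
      linarith
  rw [hset] at key
  rw [key, hS, Finset.prod_image (fun x _ y _ h => by
    simpa using (Prod.mk.injEq j x j y).mp h |>.2)]
  rw [Finset.prod_congr rfl fun k _ => prob_Y0 Y μ hYm h01 hP hμ0 j k]
  exact (ENNReal.ofReal_prod_of_nonneg fun k _ => by linarith [hμ1 k]).symm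

lemma prob_Z (hYm : ∀ j i, Measurable (Y j i)) (h01 : ∀ j i ω, Y j i ω = 0 ∨ Y j i ω = 1)
    (hP : ∀ j i, ℙ {ω | Y j i ω = 1} = ENNReal.ofReal (μ i)) (hμ0 : ∀ i, 0 ≤ μ i)
    (hμ1 : ∀ i, μ i ≤ 1)
    (hind : iIndepFun (β := fun _ : Fin T × Fin n => ℝ) (fun q ω => Y q.1 q.2 ω) ℙ)
    (j : Fin T) (i : Fin n) :
    ℙ {ω | Y j i ω * (∏ k ∈ Finset.Iio i, (1 - Y j k ω)) = 1}
      = ENNReal.ofReal (μ i * ∏ k ∈ Finset.Iio i, (1 - μ k)) := by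
  classical
  set S₀ : Finset (Fin T × Fin n) := (Finset.Iio i).image (fun k => ((j, k) : Fin T × Fin n))
    with hS₀
  have hnotmem : ((j, i) : Fin T × Fin n) ∉ S₀ := by
    intro h
    rcases Finset.mem_image.mp h with ⟨k, hk, heq⟩
    have hki : k = i := (Prod.mk.injEq j k j i).mp heq |>.2
    rw [hki] at hk
    exact absurd (Finset.mem_Iio.mp hk) (lt_irrefl i)
  set S : Finset (Fin T × Fin n) := insert (j, i) S₀ with hS
  set sets : Fin T × Fin n → Set ℝ := fun q => if q.2 = i then ({1} : Set ℝ) else {0} with hsets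
  have key := hind.measure_inter_preimage_eq_mul (S := S) (sets := sets)
    (fun q _ => by by_cases h : q.2 = i <;> simp [hsets, h, measurableSet_singleton])
  have hmul01 : ∀ ω, Y j i ω * (∏ k ∈ Finset.Iio i, (1 - Y j k ω)) = 1
      ↔ (Y j i ω = 1 ∧ ∀ k, k < i → Y j k ω = 0) := by
    intro ω
    have hprod01 := prod01_mem (Finset.Iio i) (fun k => 1 - Y j k ω)
      (fun k _ => by rcases h01 j k ω with h | h <;> simp [h])
    constructor
    · intro h
      rcases h01 j i ω with hY | hY
      · rw [hY, zero_mul] at h; norm_num at h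
      · rcases hprod01 with hp | hp
        · rw [hp, mul_zero] at h; norm_num at h
        · refine ⟨hY, fun k hk => ?_⟩
          have := (prod01_eq_one_iff (Finset.Iio i) (fun l => 1 - Y j l ω)
            (fun l _ => by rcases h01 j l ω with h' | h' <;> simp [h'])).mp hp k
            (Finset.mem_Iio.mpr hk)
          linarith
    · rintro ⟨hY, hall⟩
      rw [hY, one_mul]
      rw [prod01_eq_one_iff _ _ (fun k _ => by rcases h01 j k ω with h' | h' <;> simp [h'])]
      intro k hk
      rw [hall k (Finset.mem_Iio.mp hk)]; ring
  have hset : (⋂ q ∈ S, (fun ω => Y q.1 q.2 ω) ⁻¹' sets q)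
      = {ω | Y j i ω * (∏ k ∈ Finset.Iio i, (1 - Y j k ω)) = 1} := by
    ext ω
    rw [Set.mem_setOf_eq, hmul01 ω]
    constructor
    · intro hω
      constructor
      · have := Set.mem_iInter₂.mp hω (j, i) (Finset.mem_insert_self _ _)
        simpa [hsets] using this
      · intro k hk
        have := Set.mem_iInter₂.mp hω (j, k) (Finset.mem_insert_of_mem
          (Finset.mem_image.mpr ⟨k, Finset.mem_Iio.mpr hk, rfl⟩))
        simpa [hsets, ne_of_lt hk] using this
    · rintro ⟨hY, hall⟩
      refine Set.mem_iInter₂.mpr ?_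
      rintro ⟨a, b⟩ hq
      rcases Finset.mem_insert.mp hq with heq | hmem
      · cases heq
        simpa [hsets] using hY
      · rcases Finset.mem_image.mp hmem with ⟨k, hk, heq⟩
        cases heq
        simpa [hsets, ne_of_lt (Finset.mem_Iio.mp hk)] using hall _ (Finset.mem_Iio.mp hk)
  rw [hset] at key
  rw [key, hS, Finset.prod_insert hnotmem]
  have h1 : ℙ ((fun ω => Y j i ω) ⁻¹' sets (j, i)) = ENNReal.ofReal (μ i) := by
    have : sets (j, i) = ({1} : Set ℝ) := by simp [hsets]
    rw [this]
    exact hP j i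
  have h2 : ∏ q ∈ S₀, ℙ ((fun ω => Y q.1 q.2 ω) ⁻¹' sets q)
      = ENNReal.ofReal (∏ k ∈ Finset.Iio i, (1 - μ k)) := by
    have hsets0 : ∀ k ∈ Finset.Iio i, ℙ ((fun ω => Y j k ω) ⁻¹' sets (j, k))
        = ENNReal.ofReal (1 - μ k) := by
      intro k hk
      have he : sets (j, k) = ({0} : Set ℝ) := by
        simp [hsets, ne_of_lt (Finset.mem_Iio.mp hk)]
      rw [he]
      exact prob_Y0 Y μ hYm h01 hP hμ0 j k
    rw [hS₀, Finset.prod_image (fun x _ y _ h => by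
      simpa using (Prod.mk.injEq j x j y).mp h |>.2), Finset.prod_congr rfl hsets0]
    exact (ENNReal.ofReal_prod_of_nonneg fun k _ => by linarith [hμ1 k]).symm
  rw [h1, h2, ← ENNReal.ofReal_mul (hμ0 i)]

end P2




lemma arm_est (Tr d p' q' m SZ SW : ℝ) (hT : 0 < Tr) (hp : 0 < p') (hpq : p' ≤ q')
    (hm0 : 0 ≤ m) (hm1 : m ≤ 1) (hd : 0 < d) (hd1 : d ≤ 1)
    (h1 : Tr * (m * q') - Tr * (d * p' / 16) < SZ) (h2 : SZ < Tr * (m * q') + Tr * (d * p' / 16))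
    (h3 : Tr * q' - Tr * (d * p' / 16) < SW) (h4 : SW < Tr * q' + Tr * (d * p' / 16)) :
    0 < SW ∧ m - 2 * d / 15 < SZ / SW ∧ SZ / SW < m + 2 * d / 15 := by
  have hq'0 : 0 < q' := lt_of_lt_of_le hp hpq
  have hA : Tr * p' ≤ Tr * q' := mul_le_mul_of_nonneg_left hpq hT.le
  have hB : Tr * (d * p') ≤ Tr * p' := by nlinarith
  have hTp : 0 < Tr * p' := mul_pos hT hp
  have hSW2 : (15 / 16 : ℝ) * (Tr * p') < SW := by nlinarith
  have hSW : 0 < SW := by nlinarith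
  have hε : 0 < Tr * (d * p' / 16) := by positivity
  have hεle : Tr * (d * p' / 16) ≤ Tr * p' / 16 := by nlinarith
  have hmSWlt : m * SW < Tr * (m * q') + Tr * (d * p' / 16) := by nlinarith
  have hmSWgt : Tr * (m * q') - Tr * (d * p' / 16) < m * SW + (1 - m) * SW := by nlinarith
  have h2d : 2 * Tr * (d * p' / 16) < (2 * d / 15) * SW := by nlinarith
  refine ⟨hSW, ?_, ?_⟩
  · rw [lt_div_iff₀ hSW]
    nlinarith
  · rw [div_lt_iff₀ hSW]
    nlinarith

lemma tail_num (n T : ℕ) (d p' δ : ℝ) (hn : 2 ≤ n) (hT : 1 ≤ T)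
    (hd : 0 < d) (hd1 : d ≤ 1) (hp : 0 < p') (hp1 : p' ≤ 1) (hδ : 0 < δ) (hδ1 : δ < 1)
    (hTge : ((4096 : ℝ) / (d ^ 2 * p' ^ 2)) * Real.log ((n : ℝ) / (d * p' * δ)) ≤ (T : ℝ)) :
    (n : ℝ) * (4 * Real.exp (-((T : ℝ) * (d * p' / 16) ^ 2 / 4))) ≤ δ := by
  have hn0 : (0 : ℝ) < n := by positivity
  have hn2 : (2 : ℝ) ≤ n := by exact_mod_cast hn
  have hnδ : (2 : ℝ) ≤ n / δ := le_trans hn2 (by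
    rw [le_div_iff₀ hδ]
    nlinarith)
  have hnδ0 : (0 : ℝ) < n / δ := by positivity
  have hfrac : (n : ℝ) / δ ≤ n / (d * p' * δ) := by
    apply div_le_div_of_nonneg_left hn0.le (by positivity)
    nlinarith [mul_le_one₀ hd1 hp.le hp1]
  set L := Real.log ((n : ℝ) / (d * p' * δ)) with hL
  have hlognδ : Real.log ((n : ℝ) / δ) ≤ L := Real.log_le_log hnδ0 hfrac
  have hlog2 : Real.log 2 ≤ L := le_trans (Real.log_le_log two_pos hnδ) hlognδ
  have hL0 : 0 ≤ L := le_trans (Real.log_nonneg one_le_two) hlog2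
  -- T ε² / 4 ≥ 4 L
  have hkey : 4 * L ≤ (T : ℝ) * (d * p' / 16) ^ 2 / 4 := by
    have hdp : 0 < d ^ 2 * p' ^ 2 := by positivity
    have := mul_le_mul_of_nonneg_right hTge (le_of_lt (by positivity : (0:ℝ) < d ^ 2 * p' ^ 2 / 1024))
    calc 4 * L = (4096 / (d ^ 2 * p' ^ 2)) * L * (d ^ 2 * p' ^ 2 / 1024) := by
          field_simp
          ring
      _ ≤ (T : ℝ) * (d ^ 2 * p' ^ 2 / 1024) := this
      _ = (T : ℝ) * (d * p' / 16) ^ 2 / 4 := by ring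
  -- log (4n/δ) ≤ 3 L ≤ 4 L
  have hlog4n : Real.log (4 * ((n : ℝ) / δ)) ≤ 4 * L := by
    rw [Real.log_mul (by norm_num) (ne_of_gt hnδ0)]
    have h4 : Real.log 4 = 2 * Real.log 2 := by
      rw [show (4 : ℝ) = 2 ^ 2 by norm_num, Real.log_pow]
      push_cast; ring
    rw [h4]
    linarith
  have hexp : Real.exp (-((T : ℝ) * (d * p' / 16) ^ 2 / 4)) ≤ δ / (4 * n) := by
    have h1 : Real.exp (-((T : ℝ) * (d * p' / 16) ^ 2 / 4)) ≤
        Real.exp (-(Real.log (4 * ((n : ℝ) / δ)))) := by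
      rw [Real.exp_le_exp]
      linarith
    refine h1.trans ?_
    have hinv : (4 * ((n : ℝ) / δ))⁻¹ = δ / (4 * n) := by
      field_simp
    rw [Real.exp_neg, Real.exp_log (by positivity), hinv]
  calc (n : ℝ) * (4 * Real.exp (-((T : ℝ) * (d * p' / 16) ^ 2 / 4)))
      ≤ (n : ℝ) * (4 * (δ / (4 * n))) := by
        apply mul_le_mul_of_nonneg_left _ hn0.le
        apply mul_le_mul_of_nonneg_left hexp (by norm_num)
    _ = δ := by
        field_simp




/-- Theorem 3.1, sample complexity of MaximalSampling: there is a
universal constant `C > 0` such that for every `δ ∈ (0,1)`, if the number of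
plays satisfies `T ≥ (C/(Δ²p²))·ln(n/(Δpδ))` (with `p = ∏_{k=1}^{n-1}(1-μ k)`),
then with probability at least `1 - δ` the best arm has the strictly highest
empirical mean. -/
theorem maximalSampling_sample_complexity :
    ∃ C : ℝ, 0 < C ∧
    ∀ (n T : ℕ), 2 ≤ n → 1 ≤ T →
    ∀ (Ω : Type) (mΩ : MeasureSpace Ω), IsProbabilityMeasure (ℙ : Measure Ω) →
    ∀ (μ : Fin n → ℝ), (∀ i, μ i ∈ Set.Icc (0 : ℝ) 1) →
    ∀ (istar : Fin n), (∀ i, i ≠ istar → μ i < μ istar) →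
    ∀ (Δ : ℝ), IsLeast {d : ℝ | ∃ i, i ≠ istar ∧ d = μ istar - μ i} Δ → 0 < Δ →
    ∀ (p : ℝ),
      p = ∏ k ∈ Finset.univ.filter (fun k : Fin n => (k : ℕ) < n - 1), (1 - μ k) →
      0 < p →
    ∀ (Y : Fin T → Fin n → Ω → ℝ),
    (∀ j i, Measurable (Y j i)) →
    (∀ j i ω, Y j i ω = 0 ∨ Y j i ω = 1) →
    (∀ j i, ℙ {ω | Y j i ω = 1} = ENNReal.ofReal (μ i)) →
    iIndepFun (β := fun _ : Fin T × Fin n => ℝ) (fun q ω => Y q.1 q.2 ω) ℙ →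
    ∀ (muhat : Fin n → Ω → ℝ),
    (∀ i ω, muhat i ω =
      (∑ j, Y j i ω * ∏ k ∈ Finset.Iio i, (1 - Y j k ω)) /
        ((T : ℝ) - ∑ k ∈ Finset.Iio i, ∑ j, Y j k ω * ∏ l ∈ Finset.Iio k, (1 - Y j l ω))) →
    ∀ (δ : ℝ), δ ∈ Set.Ioo (0 : ℝ) 1 →
    (C / (Δ ^ 2 * p ^ 2)) * Real.log (n / (Δ * p * δ)) ≤ (T : ℝ) →
    ENNReal.ofReal (1 - δ) ≤
      ℙ {ω | ∀ i, i ≠ istar → muhat i ω < muhat istar ω} := by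
  classical
  refine ⟨4096, by norm_num, ?_⟩
  intro n T hn hT Ω mΩ hprob μ hμIcc istar hbest Δ hΔleast hΔpos p hpdef hppos
    Y hYm hY01 hYP hYind muhat hmuhat δ hδ hTge
  haveI := hprob
  have hμ0 : ∀ i, 0 ≤ μ i := fun i => (hμIcc i).1
  have hμ1 : ∀ i, μ i ≤ 1 := fun i => (hμIcc i).2
  obtain ⟨⟨i₀, hi₀ne, hΔeq⟩, hΔlb'⟩ := hΔleast
  have hΔlb : ∀ i, i ≠ istar → Δ ≤ μ istar - μ i := fun i hi => hΔlb' ⟨i, hi, rfl⟩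
  have hΔ1 : Δ ≤ 1 := by
    rw [hΔeq]; linarith [hμ0 i₀, hμ1 istar]
  -- q and its bounds
  set q : Fin n → ℝ := fun i => ∏ k ∈ Finset.Iio i, (1 - μ k) with hqdef
  have hq0 : ∀ i, 0 ≤ q i := fun i => Finset.prod_nonneg fun k _ => by linarith [hμ1 k]
  have hq1 : ∀ i, q i ≤ 1 := fun i =>
    Finset.prod_le_one (fun k _ => by linarith [hμ1 k]) (fun k _ => by linarith [hμ0 k])
  have hpq : ∀ i, p ≤ q i := by
    intro i
    have hsub : Finset.Iio i ⊆ Finset.univ.filter (fun k : Fin n => (k : ℕ) < n - 1) := by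
      intro k hk
      simp only [Finset.mem_filter, Finset.mem_univ, true_and]
      have hk' : k < i := Finset.mem_Iio.mp hk
      have h1 : (k : ℕ) < (i : ℕ) := hk'
      have h2 : (i : ℕ) < n := i.isLt
      omega
    rw [hpdef, ← Finset.prod_sdiff hsub]
    have hrest : (∏ k ∈ (Finset.univ.filter (fun k : Fin n => (k : ℕ) < n - 1)) \ Finset.Iio i,
        (1 - μ k)) ≤ 1 :=
      Finset.prod_le_one (fun k _ => by linarith [hμ1 k]) (fun k _ => by linarith [hμ0 k])
    have hrest0 : (0:ℝ) ≤ ∏ k ∈ (Finset.univ.filter (fun k : Fin n => (k : ℕ) < n - 1)) \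
        Finset.Iio i, (1 - μ k) :=
      Finset.prod_nonneg (fun k _ => by linarith [hμ1 k])
    calc (∏ k ∈ (Finset.univ.filter (fun k : Fin n => (k : ℕ) < n - 1)) \ Finset.Iio i,
          (1 - μ k)) * q i ≤ 1 * q i := mul_le_mul_of_nonneg_right hrest (hq0 i)
      _ = q i := one_mul _
  have hp1 : p ≤ 1 := le_trans (hpq ⟨0, by omega⟩) (hq1 _)
  -- Z and W
  set Zf : Fin n → Fin T → Ω → ℝ :=
    fun i j ω => Y j i ω * ∏ k ∈ Finset.Iio i, (1 - Y j k ω) with hZdef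
  set Wf : Fin n → Fin T → Ω → ℝ :=
    fun i j ω => ∏ k ∈ Finset.Iio i, (1 - Y j k ω) with hWdef
  have hWm : ∀ i j, Measurable (Wf i j) := fun i j =>
    Finset.measurable_prod _ fun k _ => measurable_const.sub (hYm j k)
  have hZm : ∀ i j, Measurable (Zf i j) := fun i j => (hYm j i).mul (hWm i j)
  have hW01 : ∀ i j ω, Wf i j ω = 0 ∨ Wf i j ω = 1 := fun i j ω =>
    prod01_mem _ _ fun k _ => by rcases hY01 j k ω with h | h <;> simp [h]
  have hZ01 : ∀ i j ω, Zf i j ω = 0 ∨ Zf i j ω = 1 := by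
    intro i j ω
    rcases hY01 j i ω with h | h
    · left; simp [hZdef, h]
    · rcases hW01 i j ω with h' | h'
      · left
        have : Zf i j ω = Y j i ω * Wf i j ω := rfl
        rw [this, h', mul_zero]
      · right
        have : Zf i j ω = Y j i ω * Wf i j ω := rfl
        rw [this, h', h, mul_one]
  have hindZ : ∀ i (j : Fin T) (s : Finset (Fin T)), j ∉ s →
      IndepFun (Zf i j) (fun ω => ∑ j' ∈ s, Zf i j' ω) ℙ := by
    intro i j s hj
    exact indep_block Y hYm hYind
      (fun r => r i * ∏ k ∈ Finset.Iio i, (1 - r k))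
      ((measurable_pi_apply i).mul
        (Finset.measurable_prod _ fun k _ => measurable_const.sub (measurable_pi_apply k)))
      j s hj
  have hindW : ∀ i (j : Fin T) (s : Finset (Fin T)), j ∉ s →
      IndepFun (Wf i j) (fun ω => ∑ j' ∈ s, Wf i j' ω) ℙ := by
    intro i j s hj
    exact indep_block Y hYm hYind
      (fun r => ∏ k ∈ Finset.Iio i, (1 - r k))
      (Finset.measurable_prod _ fun k _ => measurable_const.sub (measurable_pi_apply k))
      j s hj
  have hPZ : ∀ i j, ℙ {ω | Zf i j ω = 1} = ENNReal.ofReal (μ i * q i) := fun i j =>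
    prob_Z Y μ hYm hY01 hYP hμ0 hμ1 hYind j i
  have hPW : ∀ i j, ℙ {ω | Wf i j ω = 1} = ENNReal.ofReal (q i) := fun i j =>
    prob_W Y μ hYm hY01 hYP hμ0 hμ1 hYind j i
  -- the bad events
  set ε : ℝ := Δ * p / 16 with hεdef
  have hε : 0 < ε := by positivity
  have hε1 : ε ≤ 1 := by nlinarith
  set badZ : Fin n → Set Ω := fun i =>
    {ω | (∑ j, Zf i j ω) ≤ T * (μ i * q i) - T * ε} ∪
      {ω | T * (μ i * q i) + T * ε ≤ ∑ j, Zf i j ω} with hbadZdef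
  set badW : Fin n → Set Ω := fun i =>
    {ω | (∑ j, Wf i j ω) ≤ T * q i - T * ε} ∪
      {ω | T * q i + T * ε ≤ ∑ j, Wf i j ω} with hbadWdef
  have hθZ0 : ∀ i, 0 ≤ μ i * q i := fun i => mul_nonneg (hμ0 i) (hq0 i)
  have hθZ1 : ∀ i, μ i * q i ≤ 1 := fun i => mul_le_one₀ (hμ1 i) (hq0 i) (hq1 i)
  have hbadZ : ∀ i, ℙ (badZ i) ≤ ENNReal.ofReal (2 * Real.exp (-((T : ℝ) * ε ^ 2 / 4))) :=
    fun i => bern_chernoff (fun j => Zf i j) (hZm i) (fun j => hZ01 i j)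
      (hθZ0 i) (hθZ1 i) (hPZ i) (hindZ i) hε hε1
  have hbadW : ∀ i, ℙ (badW i) ≤ ENNReal.ofReal (2 * Real.exp (-((T : ℝ) * ε ^ 2 / 4))) :=
    fun i => bern_chernoff (fun j => Wf i j) (hWm i) (fun j => hW01 i j)
      (hq0 i) (hq1 i) (hPW i) (hindW i) hε hε1
  set Bad : Set Ω := ⋃ i, (badZ i ∪ badW i) with hBaddef
  have hBadProb : ℙ Bad ≤ ENNReal.ofReal δ := by
    have e_nonneg : (0:ℝ) ≤ 2 * Real.exp (-((T : ℝ) * ε ^ 2 / 4)) := by positivity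
    calc ℙ Bad ≤ ∑' i : Fin n, ℙ (badZ i ∪ badW i) := measure_iUnion_le _
      _ = ∑ i : Fin n, ℙ (badZ i ∪ badW i) := tsum_fintype _
      _ ≤ ∑ i : Fin n, ENNReal.ofReal (4 * Real.exp (-((T : ℝ) * ε ^ 2 / 4))) := by
          refine Finset.sum_le_sum fun i _ => ?_
          calc ℙ (badZ i ∪ badW i) ≤ ℙ (badZ i) + ℙ (badW i) := measure_union_le _ _
            _ ≤ ENNReal.ofReal (2 * Real.exp (-((T : ℝ) * ε ^ 2 / 4)))
                + ENNReal.ofReal (2 * Real.exp (-((T : ℝ) * ε ^ 2 / 4))) :=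
                add_le_add (hbadZ i) (hbadW i)
            _ = ENNReal.ofReal (4 * Real.exp (-((T : ℝ) * ε ^ 2 / 4))) := by
                rw [← ENNReal.ofReal_add e_nonneg e_nonneg]; ring_nf
      _ = (n : ℕ) * ENNReal.ofReal (4 * Real.exp (-((T : ℝ) * ε ^ 2 / 4))) := by
          rw [Finset.sum_const, Finset.card_univ, Fintype.card_fin, nsmul_eq_mul]
      _ = ENNReal.ofReal ((n : ℝ) * (4 * Real.exp (-((T : ℝ) * ε ^ 2 / 4)))) := by
          rw [ENNReal.ofReal_mul (by positivity : (0:ℝ) ≤ (n:ℝ))]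
          congr 1
          exact (ENNReal.ofReal_natCast n).symm
      _ ≤ ENNReal.ofReal δ := by
          apply ENNReal.ofReal_le_ofReal
          rw [hεdef]
          exact tail_num n T Δ p δ hn hT hΔpos hΔ1 hppos hp1 hδ.1 hδ.2 hTge
  -- measurability of muhat and the good event
  have hmuhatm : ∀ i, Measurable (muhat i) := by
    intro i
    have : muhat i = fun ω =>
        (∑ j, Y j i ω * ∏ k ∈ Finset.Iio i, (1 - Y j k ω)) /
          ((T : ℝ) - ∑ k ∈ Finset.Iio i, ∑ j, Y j k ω * ∏ l ∈ Finset.Iio k, (1 - Y j l ω)) :=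
      funext (hmuhat i)
    rw [this]
    refine Measurable.div ?_ ?_
    · exact Finset.measurable_sum _ fun j _ => (hYm j i).mul
        (Finset.measurable_prod _ fun k _ => measurable_const.sub (hYm j k))
    · exact measurable_const.sub (Finset.measurable_sum _ fun k _ =>
        Finset.measurable_sum _ fun j _ => (hYm j k).mul
          (Finset.measurable_prod _ fun l _ => measurable_const.sub (hYm j l)))
  set Good : Set Ω := {ω | ∀ i, i ≠ istar → muhat i ω < muhat istar ω} with hGooddef
  have hGoodMeas : MeasurableSet Good := by
    have : Good = ⋂ i, {ω | i ≠ istar → muhat i ω < muhat istar ω} := by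
      ext ω; simp [hGooddef, Set.mem_iInter]
    rw [this]
    refine MeasurableSet.iInter fun i => ?_
    by_cases hi : i = istar
    · have : {ω | i ≠ istar → muhat i ω < muhat istar ω} = Set.univ := by
        ext ω; simp [hi]
      rw [this]; exact MeasurableSet.univ
    · have : {ω | i ≠ istar → muhat i ω < muhat istar ω}
          = {ω | muhat i ω < muhat istar ω} := by
        ext ω; simp [hi]
      rw [this]
      exact measurableSet_lt (hmuhatm i) (hmuhatm istar)
  -- pointwise: not bad implies good
  have hTpos : (0:ℝ) < (T:ℝ) := by
    have : 0 < T := hT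
    exact_mod_cast this
  have hGoodOfNotBad : ∀ ω, ω ∉ Bad → ω ∈ Good := by
    intro ω hω
    simp only [hBaddef, Set.mem_iUnion, not_exists] at hω
    have hbounds : ∀ i,
        (T : ℝ) * (μ i * q i) - T * ε < ∑ j, Zf i j ω ∧
        (∑ j, Zf i j ω) < T * (μ i * q i) + T * ε ∧
        (T : ℝ) * q i - T * ε < ∑ j, Wf i j ω ∧
        (∑ j, Wf i j ω) < T * q i + T * ε := by
      intro i
      have h := hω i
      rw [Set.mem_union, not_or, hbadZdef, hbadWdef] at h
      obtain ⟨h1, h2⟩ := h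
      rw [Set.mem_union, not_or] at h1 h2
      simp only [Set.mem_setOf_eq, not_le] at h1 h2
      exact ⟨h1.1, h1.2, h2.1, h2.2⟩
    -- denominator identity
    have hden : ∀ i : Fin n,
        (T : ℝ) - ∑ k ∈ Finset.Iio i, ∑ j, Y j k ω * ∏ l ∈ Finset.Iio k, (1 - Y j l ω)
          = ∑ j, Wf i j ω := by
      intro i
      have hfil : ∀ k ∈ Finset.Iio i, (Finset.Iio i).filter (· < k) = Finset.Iio k := by
        intro k hk
        ext l
        simp only [Finset.mem_filter, Finset.mem_Iio]
        exact ⟨fun h => h.2, fun h => ⟨h.trans (Finset.mem_Iio.mp hk), h⟩⟩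
      have htel : ∀ j : Fin T,
          ∑ k ∈ Finset.Iio i, Y j k ω * ∏ l ∈ Finset.Iio k, (1 - Y j l ω)
            = 1 - Wf i j ω := by
        intro j
        have h := telescope_prod (Finset.Iio i) (fun k => Y j k ω)
        rw [Finset.sum_congr rfl fun k hk => by rw [hfil k hk]] at h
        exact h
      rw [Finset.sum_comm, Finset.sum_congr rfl fun j _ => htel j, Finset.sum_sub_distrib,
        Finset.sum_const, Finset.card_univ, Fintype.card_fin, nsmul_eq_mul, mul_one]
      ring
    have hmuhat_eq : ∀ i : Fin n, muhat i ω = (∑ j, Zf i j ω) / (∑ j, Wf i j ω) := by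
      intro i
      rw [hmuhat i ω, hden i]
    -- per-arm estimates
    have hest : ∀ i : Fin n, 0 < ∑ j, Wf i j ω ∧
        μ i - 2 * Δ / 15 < muhat i ω ∧ muhat i ω < μ i + 2 * Δ / 15 := by
      intro i
      obtain ⟨h1, h2, h3, h4⟩ := hbounds i
      have := arm_est (T : ℝ) Δ p (q i) (μ i) (∑ j, Zf i j ω) (∑ j, Wf i j ω)
        hTpos hppos (hpq i) (hμ0 i) (hμ1 i) hΔpos hΔ1
        (by rw [← hεdef]; exact h1) (by rw [← hεdef]; exact h2)
        (by rw [← hεdef]; exact h3) (by rw [← hεdef]; exact h4)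
      rw [← hmuhat_eq i] at this
      exact this
    intro i hi
    obtain ⟨_, hlo_i, hhi_i⟩ := hest i
    obtain ⟨_, hlo_star, hhi_star⟩ := hest istar
    have hgap := hΔlb i hi
    linarith
  -- conclude
  have hsub : Goodᶜ ⊆ Bad := by
    intro ω hω
    by_contra hnb
    exact hω (hGoodOfNotBad ω hnb)
  have hGc : ℙ Goodᶜ ≤ ENNReal.ofReal δ := le_trans (measure_mono hsub) hBadProb
  have hGoodEq : ℙ Good = 1 - ℙ Goodᶜ := by
    have := prob_compl_eq_one_sub (μ := (ℙ : Measure Ω)) hGoodMeas.compl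
    rwa [compl_compl] at this
  calc ENNReal.ofReal (1 - δ) = 1 - ENNReal.ofReal δ := by
        rw [ENNReal.ofReal_sub _ hδ.1.le, ENNReal.ofReal_one]
    _ ≤ 1 - ℙ Goodᶜ := tsub_le_tsub_left hGc 1
    _ = ℙ Good := hGoodEq.symm
end

section
/- For every η ∈ (0,1), the total number of plays T used by SuffixSample satisfies P{ T > t·(1 + Σ_{i=1}^{n−1} μ_i + (1−η)·Δ·√(n−1)/2) } ≤ exp( −(1−η)²·t·Δ²/2 ). -/
open MeasureTheory ProbabilityTheory Finset

section Helpers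

open Real

/-- Hoeffding's lemma for a Bernoulli-type mgf: `1 - p + p e^l ≤ exp (p l + l²/8)`. -/
lemma bern_mgf_le (p : ℝ) (hp0 : 0 ≤ p) (hp1 : p ≤ 1) (l : ℝ) :
    1 - p + p * exp l ≤ exp (p * l + l ^ 2 / 8) := by
  set A : ℝ → ℝ := fun h => 1 - p + p * exp h with hAdef
  have hApos : ∀ h, 0 < A h := by
    intro h
    show (0:ℝ) < 1 - p + p * exp h
    rcases le_or_gt 1 (exp h) with h1 | h1
    · nlinarith [mul_nonneg hp0 (sub_nonneg.2 h1)]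
    · nlinarith [exp_pos h, mul_nonneg (sub_nonneg.2 hp1) (sub_nonneg.2 h1.le)]
  have hA' : ∀ h, HasDerivAt A (p * exp h) h := fun h =>
    ((Real.hasDerivAt_exp h).const_mul p).const_add (1 - p)
  set g1 : ℝ → ℝ := fun h => p + h / 4 - p * exp h / A h with hg1def
  set g : ℝ → ℝ := fun h => p * h + h ^ 2 / 8 - Real.log (A h) with hgdef
  have hg' : ∀ h, HasDerivAt g (g1 h) h := by
    intro h
    have h1 : HasDerivAt (fun h : ℝ => p * h + h ^ 2 / 8) (p + h / 4) h := by
      have := ((hasDerivAt_id h).const_mul p).add ((hasDerivAt_pow 2 h).div_const 8)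
      refine this.congr_deriv ?_
      norm_num; ring
    have h2 : HasDerivAt (fun h => Real.log (A h)) (p * exp h / A h) h :=
      (hA' h).log (hApos h).ne'
    exact h1.sub h2
  have hg1' : ∀ h, HasDerivAt g1
      (1 / 4 - (p * exp h * A h - p * exp h * (p * exp h)) / (A h) ^ 2) h := by
    intro h
    have h1 : HasDerivAt (fun h : ℝ => p + h / 4) (1 / 4) h := by
      simpa using (hasDerivAt_id h).div_const 4 |>.const_add p
    have h2 : HasDerivAt (fun h => p * exp h / A h)
        ((p * exp h * A h - p * exp h * (p * exp h)) / (A h) ^ 2) h :=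
      ((Real.hasDerivAt_exp h).const_mul p).div (hA' h) (hApos h).ne'
    exact h1.sub h2
  have hg1deriv_nonneg :
      ∀ h, 0 ≤ 1 / 4 - (p * exp h * A h - p * exp h * (p * exp h)) / (A h) ^ 2 := by
    intro h
    have hA := hApos h
    set q : ℝ := p * exp h / A h with hq
    have hval : (p * exp h * A h - p * exp h * (p * exp h)) / (A h) ^ 2 = q - q ^ 2 := by
      field_simp [hq]
      rw [hq]; field_simp
    rw [hval]
    nlinarith [sq_nonneg (2 * q - 1)]
  have hg1mono : Monotone g1 := by
    apply monotone_of_deriv_nonneg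
    · exact fun h => (hg1' h).differentiableAt
    · intro h
      rw [(hg1' h).deriv]
      exact hg1deriv_nonneg h
  have hg10 : g1 0 = 0 := by
    simp only [hg1def, hAdef, Real.exp_zero, mul_one]
    rw [show 1 - p + p = (1:ℝ) by ring]
    simp
  have hgd : Differentiable ℝ g := fun h => (hg' h).differentiableAt
  have hgnonneg : ∀ h, 0 ≤ g h := by
    intro h
    have h0 : g 0 = 0 := by
      simp only [hgdef, hAdef, Real.exp_zero, mul_one, mul_zero]
      norm_num
    rcases le_or_gt 0 h with hh | hh
    · have : MonotoneOn g (Set.Ici 0) := by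
        apply monotoneOn_of_deriv_nonneg (convex_Ici 0) hgd.continuous.continuousOn
          (hgd.differentiableOn)
        intro x hx
        rw [(hg' x).deriv]
        rw [interior_Ici] at hx
        have : g1 0 ≤ g1 x := hg1mono (le_of_lt hx)
        linarith [hg10 ▸ this]
      have := this (Set.self_mem_Ici) (Set.mem_Ici.2 hh) hh
      linarith [h0 ▸ this]
    · have : AntitoneOn g (Set.Iic 0) := by
        apply antitoneOn_of_deriv_nonpos (convex_Iic 0) hgd.continuous.continuousOn
          (hgd.differentiableOn)
        intro x hx
        rw [(hg' x).deriv]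
        rw [interior_Iic] at hx
        have : g1 x ≤ g1 0 := hg1mono (le_of_lt hx)
        linarith [hg10 ▸ this]
      have := this (Set.mem_Iic.2 hh.le) (Set.self_mem_Iic) hh.le
      linarith [h0 ▸ this]
  have hlog : Real.log (A l) ≤ p * l + l ^ 2 / 8 := by
    have := hgnonneg l
    simp only [hgdef] at this
    linarith
  calc 1 - p + p * exp l = A l := rfl
    _ = exp (Real.log (A l)) := (Real.exp_log (hApos l)).symm
    _ ≤ exp (p * l + l ^ 2 / 8) := Real.exp_le_exp.2 hlog

lemma bern_exp_eq {Ω : Type*} (X : Ω → ℝ) (h01 : ∀ ω, X ω = 0 ∨ X ω = 1) (l : ℝ) :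
    (fun ω => exp (l * X ω)) = fun ω => 1 + (exp l - 1) * X ω := by
  funext ω
  rcases h01 ω with h | h <;> simp [h]

lemma bern_integrable_s3 {Ω : Type*} [MeasurableSpace Ω] (P : Measure Ω) [IsProbabilityMeasure P]
    (X : Ω → ℝ) (hm : Measurable X) (h01 : ∀ ω, X ω = 0 ∨ X ω = 1) :
    Integrable X P := by
  have hXind : X = Set.indicator {ω | X ω = 1} (fun _ => (1:ℝ)) := by
    funext ω
    by_cases h : X ω = 1
    · simp [Set.indicator_of_mem, h, Set.mem_setOf_eq]
    · have h0 : X ω = 0 := (h01 ω).resolve_right h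
      simp [Set.indicator_of_notMem, h, Set.mem_setOf_eq, h0]
  rw [hXind]
  exact (integrable_const 1).indicator (hm (measurableSet_singleton 1))

lemma bern_exp_integrable {Ω : Type*} [MeasurableSpace Ω] (P : Measure Ω) [IsProbabilityMeasure P]
    (X : Ω → ℝ) (hm : Measurable X) (h01 : ∀ ω, X ω = 0 ∨ X ω = 1) (l : ℝ) :
    Integrable (fun ω => exp (l * X ω)) P := by
  rw [bern_exp_eq X h01 l]
  exact (integrable_const 1).add ((bern_integrable_s3 P X hm h01).const_mul _)

lemma bern_mgf_s3 {Ω : Type*} [MeasurableSpace Ω] (P : Measure Ω) [IsProbabilityMeasure P]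
    (X : Ω → ℝ) (hm : Measurable X) (h01 : ∀ ω, X ω = 0 ∨ X ω = 1)
    (p : ℝ) (hp0 : 0 ≤ p) (hp : P {ω | X ω = 1} = ENNReal.ofReal p) (l : ℝ) :
    mgf X P l = 1 - p + p * exp l := by
  have hXind : X = Set.indicator {ω | X ω = 1} (fun _ => (1:ℝ)) := by
    funext ω
    by_cases h : X ω = 1
    · simp [Set.indicator_of_mem, h, Set.mem_setOf_eq]
    · have h0 : X ω = 0 := (h01 ω).resolve_right h
      simp [Set.indicator_of_notMem, h, Set.mem_setOf_eq, h0]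
  have hs : MeasurableSet {ω | X ω = 1} := hm (measurableSet_singleton 1)
  have hEX : ∫ ω, X ω ∂P = p := by
    conv_lhs => rw [hXind]
    rw [integral_indicator_const _ hs, measureReal_def, hp, smul_eq_mul, mul_one,
      ENNReal.toReal_ofReal hp0]
  have : mgf X P l = ∫ ω, (1 + (exp l - 1) * X ω) ∂P := by
    rw [mgf]
    congr 1
    exact bern_exp_eq X h01 l
  rw [this, integral_add (integrable_const 1) ((bern_integrable_s3 P X hm h01).const_mul _),
    integral_const, integral_const_mul, hEX]
  simp only [measureReal_def, measure_univ, ENNReal.toReal_one, smul_eq_mul, one_mul]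
  ring

end Helpers

/-- In the SuffixSample subroutine, for every `η ∈ (0,1)`, with
`Δ = μ_{i*} - max_{i ≠ i*} μ i`, the total number of plays `T` satisfies
`P{ T > t·(1 + Σ_{i<n-1} μ i + (1-η)·Δ·√(n-1)/2) } ≤ exp(-(1-η)²·t·Δ²/2)`. -/
theorem suffixSample_play_count_tail_eta
    (n t : ℕ) (hn : 2 ≤ n) (ht : 1 ≤ t)
    (Ω : Type) (mΩ : MeasureSpace Ω) (hP : IsProbabilityMeasure (ℙ : Measure Ω))
    (μ : Fin n → ℝ) (hμ : ∀ i, μ i ∈ Set.Icc (0 : ℝ) 1)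
    (istar : Fin n) (hbest : ∀ i, i ≠ istar → μ i < μ istar)
    (Δ : ℝ) (hΔ : IsLeast {d : ℝ | ∃ i, i ≠ istar ∧ d = μ istar - μ i} Δ) (hΔpos : 0 < Δ)
    (Y : Fin n → Fin t → Ω → ℝ)
    (hYmeas : ∀ i j, Measurable (Y i j))
    (hY01 : ∀ i j ω, Y i j ω = 0 ∨ Y i j ω = 1)
    (hYmean : ∀ i j, ℙ {ω | Y i j ω = 1} = ENNReal.ofReal (μ i))
    (hYindep : iIndepFun
      (fun (p : Fin n × Fin t) ω => Y p.1 p.2 ω) ℙ)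
    (T : Ω → ℝ)
    (hT : ∀ ω, T ω = t + ∑ i ∈ Finset.univ.filter (fun i : Fin n => (i : ℕ) < n - 1),
      ∑ j, Y i j ω)
    (η : ℝ) (hη : η ∈ Set.Ioo (0 : ℝ) 1) :
    ℙ {ω | T ω > t * (1 + (∑ i ∈ Finset.univ.filter (fun i : Fin n => (i : ℕ) < n - 1), μ i)
          + (1 - η) * Δ * Real.sqrt (n - 1) / 2)}
      ≤ ENNReal.ofReal (Real.exp (-((1 - η) ^ 2 * t * Δ ^ 2) / 2)) := by
  obtain ⟨hη0, hη1⟩ := hη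
  set s : Finset (Fin n) := Finset.univ.filter (fun i : Fin n => (i : ℕ) < n - 1) with hs
  have hcard_s : s.card = n - 1 := by
    have hmem : (n - 1 : ℕ) < n := by omega
    have : s = Finset.univ.erase (⟨n - 1, hmem⟩ : Fin n) := by
      ext i
      simp only [hs, Finset.mem_filter, Finset.mem_univ, true_and, Finset.mem_erase, and_true]
      constructor
      · intro h he
        rw [he] at h
        exact lt_irrefl _ h
      · intro hne
        have h1 := i.isLt
        by_contra h2
        exact hne (Fin.ext (show (i : ℕ) = n - 1 by omega))
    rw [this, Finset.card_erase_of_mem (Finset.mem_univ _), Finset.card_univ, Fintype.card_fin]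
  set F : Finset (Fin n × Fin t) := s ×ˢ Finset.univ with hF
  have hcardF : F.card = (n - 1) * t := by
    rw [hF, Finset.card_product, hcard_s, Finset.card_univ, Fintype.card_fin]
  set X : Fin n × Fin t → Ω → ℝ := fun p ω => Y p.1 p.2 ω with hX
  set S : Ω → ℝ := ∑ p ∈ F, X p with hS
  have hSapp : ∀ ω, S ω = ∑ i ∈ s, ∑ j, Y i j ω := by
    intro ω
    rw [hS, Finset.sum_apply, hF, Finset.sum_product]
  have hn1 : (0:ℝ) < (n:ℝ) - 1 := by
    have : (2:ℝ) ≤ (n:ℝ) := by exact_mod_cast hn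
    linarith
  have ht0 : (0:ℝ) < (t:ℝ) := by
    have : (1:ℝ) ≤ (t:ℝ) := by exact_mod_cast ht
    linarith
  have hsqrt : 0 < Real.sqrt ((n:ℝ) - 1) := Real.sqrt_pos.2 hn1
  have hsq : Real.sqrt ((n:ℝ) - 1) ^ 2 = (n:ℝ) - 1 := Real.sq_sqrt hn1.le
  set c : ℝ := (1 - η) * Δ * Real.sqrt ((n:ℝ) - 1) / 2 with hc
  have hcpos : 0 < c :=
    div_pos (mul_pos (mul_pos (by linarith) hΔpos) hsqrt) two_pos
  set ε : ℝ := (t:ℝ) * c with hε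
  have hεpos : 0 < ε := mul_pos ht0 hcpos
  set m : ℝ := ∑ i ∈ s, μ i with hm
  set Nr : ℝ := ((n:ℝ) - 1) * (t:ℝ) with hNr
  have hNrpos : 0 < Nr := mul_pos hn1 ht0
  set lam : ℝ := 4 * ε / Nr with hlamdef
  have hlam0 : 0 ≤ lam := le_of_lt (div_pos (by linarith) hNrpos)
  have hmeasX : ∀ p : Fin n × Fin t, Measurable (X p) := fun p => hYmeas p.1 p.2
  have h01X : ∀ (p : Fin n × Fin t) ω, X p ω = 0 ∨ X p ω = 1 := fun p ω => hY01 p.1 p.2 ω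
  have hintX : ∀ p ∈ F, Integrable (fun ω => Real.exp (lam * X p ω)) ℙ :=
    fun p _ => bern_exp_integrable ℙ (X p) (hmeasX p) (h01X p) lam
  have hSint : Integrable (fun ω => Real.exp (lam * S ω)) ℙ :=
    hYindep.integrable_exp_mul_sum hmeasX hintX
  have hcher := measure_ge_le_exp_mul_mgf (μ := ℙ) (X := S) (t := lam)
    ((t:ℝ) * m + ε) hlam0 hSint
  -- the sum over F of the means
  have hsumF : ∑ p ∈ F, μ p.1 = (t:ℝ) * m := by
    rw [hF, Finset.sum_product]
    simp only [Finset.sum_const, Finset.card_univ, Fintype.card_fin, nsmul_eq_mul]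
    rw [← Finset.mul_sum, hm]
  have hcast : ((((n - 1) * t : ℕ)):ℝ) = Nr := by
    rw [hNr, Nat.cast_mul, Nat.cast_sub (by omega : 1 ≤ n), Nat.cast_one]
  -- the mgf bound
  have hmgf : mgf S ℙ lam ≤ Real.exp (lam * ((t:ℝ) * m) + Nr * lam ^ 2 / 8) := by
    have hprod : mgf S ℙ lam = ∏ p ∈ F, mgf (X p) ℙ lam := hYindep.mgf_sum hmeasX F
    have hle : ∏ p ∈ F, mgf (X p) ℙ lam
        ≤ ∏ p ∈ F, Real.exp (μ p.1 * lam + lam ^ 2 / 8) := by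
      refine Finset.prod_le_prod (fun p _ => mgf_nonneg) (fun p hp => ?_)
      rw [bern_mgf_s3 ℙ (X p) (hmeasX p) (h01X p) (μ p.1) (hμ p.1).1 (hYmean p.1 p.2) lam]
      exact bern_mgf_le (μ p.1) (hμ p.1).1 (hμ p.1).2 lam
    have hexp : ∏ p ∈ F, Real.exp (μ p.1 * lam + lam ^ 2 / 8)
        = Real.exp (∑ p ∈ F, (μ p.1 * lam + lam ^ 2 / 8)) := (Real.exp_sum F _).symm
    have hsum : ∑ p ∈ F, (μ p.1 * lam + lam ^ 2 / 8)
        = lam * ((t:ℝ) * m) + Nr * lam ^ 2 / 8 := by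
      rw [Finset.sum_add_distrib, ← Finset.sum_mul, hsumF, Finset.sum_const, hcardF,
        nsmul_eq_mul, hcast]
      ring
    rw [hprod]
    rw [hexp, hsum] at hle
    exact hle
  -- key exponent arithmetic
  have key : -lam * ((t:ℝ) * m + ε) + (lam * ((t:ℝ) * m) + Nr * lam ^ 2 / 8)
      = -((1 - η) ^ 2 * (t:ℝ) * Δ ^ 2) / 2 := by
    have h1 : -lam * ((t:ℝ) * m + ε) + (lam * ((t:ℝ) * m) + Nr * lam ^ 2 / 8)
        = -(2 * ε ^ 2 / Nr) := by
      rw [hlamdef]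
      field_simp
      ring
    have hε2 : ε ^ 2 = (t:ℝ) ^ 2 * ((1 - η) ^ 2 * Δ ^ 2) * ((n:ℝ) - 1) / 4 := by
      calc ε ^ 2 = (t:ℝ) ^ 2 * ((1 - η) ^ 2 * Δ ^ 2) * (Real.sqrt ((n:ℝ) - 1)) ^ 2 / 4 := by
            rw [hε, hc]; ring
        _ = (t:ℝ) ^ 2 * ((1 - η) ^ 2 * Δ ^ 2) * ((n:ℝ) - 1) / 4 := by rw [hsq]
    have h2 : 2 * ε ^ 2 / Nr = (1 - η) ^ 2 * (t:ℝ) * Δ ^ 2 / 2 := by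
      rw [hε2, hNr]
      field_simp
      ring
    rw [h1, h2]
    ring
  -- event inclusion
  have hsub : {ω | T ω > (t:ℝ) * (1 + m + c)} ⊆ {ω | (t:ℝ) * m + ε ≤ S ω} := by
    intro ω hω
    simp only [Set.mem_setOf_eq] at hω ⊢
    rw [hT ω, ← hSapp ω] at hω
    rw [hε]
    nlinarith [hω]
  calc ℙ {ω | T ω > (t:ℝ) * (1 + m + c)}
      ≤ ℙ {ω | (t:ℝ) * m + ε ≤ S ω} := measure_mono hsub
    _ ≤ ENNReal.ofReal (Real.exp (-((1 - η) ^ 2 * (t:ℝ) * Δ ^ 2) / 2)) := by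
        rw [← ENNReal.ofReal_toReal (measure_ne_top ℙ {ω | (t:ℝ) * m + ε ≤ S ω})]
        apply ENNReal.ofReal_le_ofReal
        calc (ℙ {ω | (t:ℝ) * m + ε ≤ S ω}).toReal
            ≤ Real.exp (-lam * ((t:ℝ) * m + ε)) * mgf S ℙ lam := hcher
          _ ≤ Real.exp (-lam * ((t:ℝ) * m + ε))
              * Real.exp (lam * ((t:ℝ) * m) + Nr * lam ^ 2 / 8) := by
              exact mul_le_mul_of_nonneg_left hmgf (Real.exp_pos _).le
          _ = Real.exp (-lam * ((t:ℝ) * m + ε) + (lam * ((t:ℝ) * m) + Nr * lam ^ 2 / 8)) :=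
              (Real.exp_add _ _).symm
          _ = Real.exp (-((1 - η) ^ 2 * (t:ℝ) * Δ ^ 2) / 2) := by rw [key]
end
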